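/- Let 𝒜 and 𝒞 be countably generated σ-algebras on sets X and U respectively. Then every atom of the product σ-algebra 𝒜 ⊗ 𝒞 on X × U is a Cartesian product A × C, where A is an atom of 𝒜 and C is an atom of 𝒞. -/

import Mathlib

open MeasureTheory

/-- The σ-algebra of sets containing `x` iff they contain `y`. -/
def pairAlgebra {α : Type*} (x y : α) : MeasurableSpace α where
  MeasurableSet' s := (x ∈ s ↔ y ∈ s)
  measurableSet_empty := Iff.rfl
  measurableSet_compl s hs := not_congr hs
  measurableSet_iUnion f hf := by
    simp only [Set.mem_iUnion]; exact exists_congr hf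

lemma mem_measurableAtom_iff_forall {α : Type*} [m : MeasurableSpace α] {x y : α} :
    y ∈ measurableAtom x ↔ ∀ s : Set α, MeasurableSet s → (x ∈ s ↔ y ∈ s) := by
  constructor
  · intro h s hs
    refine ⟨fun hx => mem_of_mem_measurableAtom h hs hx, fun hy => ?_⟩
    by_contra hx
    exact mem_of_mem_measurableAtom h hs.compl hx hy
  · intro h
    simp only [measurableAtom, Set.mem_iInter]
    exact fun s hx hs => (h s hs).1 hx

lemma measurableSet_measurableAtom {α : Type*} [m : MeasurableSpace α]
    [MeasurableSpace.CountablyGenerated α] (x : α) :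
    MeasurableSet (measurableAtom x) := by
  classical
  obtain ⟨b, hb_count, hb_gen⟩ :=
    (MeasurableSpace.CountablyGenerated.isCountablyGenerated (α := α))
  have hb_meas : ∀ s ∈ b, MeasurableSet s := fun s hs =>
    hb_gen ▸ MeasurableSpace.measurableSet_generateFrom hs
  have key : measurableAtom x = ⋂ s ∈ b, if x ∈ s then s else sᶜ := by
    apply Set.Subset.antisymm
    · refine Set.subset_iInter₂ fun s hs => ?_
      by_cases hx : x ∈ s
      · simpa [hx] using measurableAtom_subset (hb_meas s hs) hx
      · simpa [hx] using measurableAtom_subset (hb_meas s hs).compl hx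
    · intro y hy
      simp only [Set.mem_iInter] at hy
      have hiff : ∀ s ∈ b, (x ∈ s ↔ y ∈ s) := by
        intro s hs
        have := hy s hs
        by_cases hx : x ∈ s
        · simp only [if_pos hx] at this; exact ⟨fun _ => this, fun _ => hx⟩
        · simp only [if_neg hx] at this
          exact ⟨fun h => absurd h hx, fun h => absurd h this⟩
      have hle : m ≤ pairAlgebra x y := by
        rw [hb_gen]
        exact MeasurableSpace.generateFrom_le hiff
      exact mem_measurableAtom_iff_forall.2 fun s hs => hle s hs
  rw [key]
  refine MeasurableSet.biInter hb_count fun s hs => ?_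
  by_cases hx : x ∈ s
  · simpa [hx] using hb_meas s hs
  · simpa [hx] using (hb_meas s hs).compl

lemma measurableAtom_prod {X U : Type*} [mX : MeasurableSpace X] [mU : MeasurableSpace U]
    (x : X) (u : U) :
    measurableAtom (x, u) = measurableAtom x ×ˢ measurableAtom u := by
  apply Set.Subset.antisymm
  · intro ⟨y, v⟩ h
    constructor
    · exact mem_measurableAtom_iff_forall.2 fun s hs =>
        mem_measurableAtom_iff_forall.1 h (Prod.fst ⁻¹' s) (measurable_fst hs)
    · exact mem_measurableAtom_iff_forall.2 fun s hs =>
        mem_measurableAtom_iff_forall.1 h (Prod.snd ⁻¹' s) (measurable_snd hs)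
  · intro ⟨y, v⟩ ⟨hy, hv⟩
    refine mem_measurableAtom_iff_forall.2 fun s hs => ?_
    have hle : (Prod.instMeasurableSpace : MeasurableSpace (X × U)) ≤
        pairAlgebra (x, u) (y, v) := by
      refine sup_le ?_ ?_
      · rintro s ⟨t, ht, rfl⟩
        have := mem_measurableAtom_iff_forall.1 hy t ht
        exact this
      · rintro s ⟨t, ht, rfl⟩
        have := mem_measurableAtom_iff_forall.1 hv t ht
        exact this
    exact hle s hs

/-- An atom of a σ-algebra: a nonempty measurable set whose only measurable
subsets are `∅` and itself. -/
def IsMeasurableAtom {X : Type*} (m : MeasurableSpace X) (A : Set X) : Prop :=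
  A.Nonempty ∧ MeasurableSet[m] A ∧
    ∀ s : Set X, MeasurableSet[m] s → s ⊆ A → s = ∅ ∨ s = A

lemma isMeasurableAtom_measurableAtom {α : Type*} [m : MeasurableSpace α]
    [MeasurableSpace.CountablyGenerated α] (x : α) :
    IsMeasurableAtom m (measurableAtom x) := by
  refine ⟨⟨x, mem_measurableAtom_self x⟩, measurableSet_measurableAtom x, fun s hs hsub => ?_⟩
  rcases s.eq_empty_or_nonempty with h | ⟨y, hy⟩
  · exact Or.inl h
  · have hx : x ∈ s := (mem_measurableAtom_iff_forall.1 (hsub hy) s hs).2 hy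
    exact Or.inr (Set.Subset.antisymm hsub (measurableAtom_subset hs hx))

theorem stmt_16 (X U : Type*) (𝒜 : MeasurableSpace X) (𝒞 : MeasurableSpace U)
    [𝒜.CountablyGenerated] [𝒞.CountablyGenerated]
    (K : Set (X × U)) (hK : IsMeasurableAtom (𝒜.prod 𝒞) K) :
    ∃ (A : Set X) (C : Set U),
      IsMeasurableAtom 𝒜 A ∧ IsMeasurableAtom 𝒞 C ∧ K = A ×ˢ C := by
  obtain ⟨⟨⟨x, u⟩, hxu⟩, hKmeas, hKmin⟩ := hK
  refine ⟨measurableAtom x, measurableAtom u, isMeasurableAtom_measurableAtom x,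
    isMeasurableAtom_measurableAtom u, ?_⟩
  have hprod : measurableAtom (x, u) = measurableAtom x ×ˢ measurableAtom u :=
    measurableAtom_prod x u
  have hmeas : MeasurableSet[𝒜.prod 𝒞] (measurableAtom (x, u)) := by
    rw [hprod]
    exact MeasurableSet.prod (measurableSet_measurableAtom x) (measurableSet_measurableAtom u)
  have hsub : measurableAtom (x, u) ⊆ K := measurableAtom_subset hKmeas hxu
  rcases hKmin _ hmeas hsub with h | h
  · exact absurd h (Set.nonempty_iff_ne_empty.1 ⟨(x, u), mem_measurableAtom_self _⟩)
  · rw [← h, hprod]
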